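/- Suppose the initial state is distributed as μ and (D,ρ) regenerate μ at every flaw. Then for any fixed sequence of flaws w_1,...,w_t, the probability that the algorithm's first t addressed flaws are exactly w_1,...,w_t is at most Π_{i=1}^t μ(w_i). -/
import Mathlib

open Classical in
theorem aux_13 {Ω ι : Type*} [Fintype Ω] [DecidableEq Ω]
    (μ : Ω → ℝ) (hμ1 : ∑ σ, μ σ = 1)
    (f : ι → Finset Ω)
    (ρ : ι → Ω → Ω → ℝ)
    (hkey : ∀ i τ, ∑ σ ∈ f i, μ σ * ρ i σ τ = (∑ σ ∈ f i, μ σ) * μ τ)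
    (t : ℕ) (W : Fin t → ι) :
    (∑ traj : Fin (t + 1) → Ω,
        if (∀ k : Fin t, traj k.castSucc ∈ f (W k)) then
          μ (traj 0) * ∏ k : Fin t, ρ (W k) (traj k.castSucc) (traj k.succ)
        else 0)
      = ∏ k : Fin t, ∑ σ ∈ f (W k), μ σ := by
  induction t with
  | zero =>
      simp only [Finset.univ_eq_empty, Finset.prod_empty]
      rw [← Equiv.sum_comp (Equiv.funUnique (Fin 1) Ω).symm]
      simpa using hμ1
  | succ t ih =>
      rw [← Equiv.sum_comp (Fin.consEquiv (fun _ : Fin (t + 2) => Ω)), Fintype.sum_prod_type]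
      have key : ∀ (σ : Ω) (traj' : Fin (t + 1) → Ω),
          (if (∀ k : Fin (t+1),
              (Fin.consEquiv (fun _ : Fin (t + 2) => Ω)) (σ, traj') k.castSucc ∈ f (W k)) then
            μ ((Fin.consEquiv (fun _ : Fin (t + 2) => Ω)) (σ, traj') 0) *
              ∏ k : Fin (t+1), ρ (W k)
                ((Fin.consEquiv (fun _ : Fin (t + 2) => Ω)) (σ, traj') k.castSucc)
                ((Fin.consEquiv (fun _ : Fin (t + 2) => Ω)) (σ, traj') k.succ)
          else 0)
          = (if σ ∈ f (W 0) then μ σ * ρ (W 0) σ (traj' 0) else 0) *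
            (if (∀ k : Fin t, traj' k.castSucc ∈ f (W k.succ)) then
              ∏ k : Fin t, ρ (W k.succ) (traj' k.castSucc) (traj' k.succ) else 0) := by
        intro σ traj'
        simp only [Fin.consEquiv_apply, Fin.forall_fin_succ, Fin.castSucc_zero, Fin.cons_zero,
          Fin.prod_univ_succ, ← Fin.succ_castSucc, Fin.cons_succ, Fin.succ_zero_eq_one,
          Function.comp_apply]
        by_cases h1 : σ ∈ f (W 0) <;> by_cases h2 : ∀ k : Fin t, traj' k.castSucc ∈ f (W k.succ) <;>
          simp [h1, h2, mul_assoc]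
      simp only [key]
      rw [Finset.sum_comm]
      have inner : ∀ traj' : Fin (t + 1) → Ω,
          (∑ σ, (if σ ∈ f (W 0) then μ σ * ρ (W 0) σ (traj' 0) else 0) *
            (if (∀ k : Fin t, traj' k.castSucc ∈ f (W k.succ)) then
              ∏ k : Fin t, ρ (W k.succ) (traj' k.castSucc) (traj' k.succ) else 0))
          = (∑ σ ∈ f (W 0), μ σ) *
            (if (∀ k : Fin t, traj' k.castSucc ∈ f (W k.succ)) then
              μ (traj' 0) * ∏ k : Fin t, ρ (W k.succ) (traj' k.castSucc) (traj' k.succ) else 0) := by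
        intro traj'
        rw [← Finset.sum_mul, Finset.sum_ite_mem, Finset.univ_inter, hkey]
        by_cases h2 : ∀ k : Fin t, traj' k.castSucc ∈ f (W k.succ) <;>
          simp [h2, mul_assoc]
      simp only [inner]
      rw [← Finset.mul_sum, ih (fun k => W k.succ)]
      simp [Fin.prod_univ_succ]

open Classical in
theorem stmt_13 {Ω ι : Type*} [Fintype Ω] [DecidableEq Ω]
    (μ : Ω → ℝ) (hμpos : ∀ σ, 0 < μ σ) (hμ1 : ∑ σ, μ σ = 1)
    (f : ι → Finset Ω) (A : ι → Ω → Finset Ω) (hA : ∀ i, ∀ σ ∈ f i, (A i σ).Nonempty)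
    (ρ : ι → Ω → Ω → ℝ)
    (hρ0 : ∀ i σ τ, 0 ≤ ρ i σ τ)
    (hρsupp : ∀ i, ∀ σ ∈ f i, ∀ τ, τ ∉ A i σ → ρ i σ τ = 0)
    (hρsum : ∀ i, ∀ σ ∈ f i, ∑ τ, ρ i σ τ = 1)
    (hregen : ∀ i (τ : Ω), ∑ σ ∈ f i, (μ σ / ∑ σ' ∈ f i, μ σ') * ρ i σ τ = μ τ)
    (choice : List Ω → ι) (t : ℕ) (W : Fin t → ι) :
    (∑ traj : Fin (t + 1) → Ω,
        if (∀ k : Fin t, traj k.castSucc ∈ f (W k) ∧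
            choice (List.ofFn fun j : Fin (k.val + 1) =>
              traj (Fin.castLE (Nat.succ_le_succ k.isLt.le) j)) = W k) then
          μ (traj 0) * ∏ k : Fin t, ρ (W k) (traj k.castSucc) (traj k.succ)
        else 0)
      ≤ ∏ k : Fin t, ∑ σ ∈ f (W k), μ σ := by
  have hkey : ∀ i τ, ∑ σ ∈ f i, μ σ * ρ i σ τ = (∑ σ ∈ f i, μ σ) * μ τ := by
    intro i τ
    rcases (f i).eq_empty_or_nonempty with h | h
    · simp [h]
    · have hpos : 0 < ∑ σ ∈ f i, μ σ := Finset.sum_pos (fun σ _ => hμpos σ) h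
      rw [← hregen i τ, Finset.mul_sum]
      refine Finset.sum_congr rfl fun σ _ => ?_
      field_simp
  calc (∑ traj : Fin (t + 1) → Ω,
        if (∀ k : Fin t, traj k.castSucc ∈ f (W k) ∧
            choice (List.ofFn fun j : Fin (k.val + 1) =>
              traj (Fin.castLE (Nat.succ_le_succ k.isLt.le) j)) = W k) then
          μ (traj 0) * ∏ k : Fin t, ρ (W k) (traj k.castSucc) (traj k.succ)
        else 0)
      ≤ (∑ traj : Fin (t + 1) → Ω,
        if (∀ k : Fin t, traj k.castSucc ∈ f (W k)) then
          μ (traj 0) * ∏ k : Fin t, ρ (W k) (traj k.castSucc) (traj k.succ)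
        else 0) := by
        refine Finset.sum_le_sum fun traj _ => ?_
        have hnn : 0 ≤ μ (traj 0) * ∏ k : Fin t, ρ (W k) (traj k.castSucc) (traj k.succ) :=
          mul_nonneg (hμpos _).le (Finset.prod_nonneg fun k _ => hρ0 _ _ _)
        by_cases h : (∀ k : Fin t, traj k.castSucc ∈ f (W k) ∧
            choice (List.ofFn fun j : Fin (k.val + 1) =>
              traj (Fin.castLE (Nat.succ_le_succ k.isLt.le) j)) = W k)
        · rw [if_pos h, if_pos (fun k => (h k).1)]
        · rw [if_neg h]
          split <;> [exact hnn; exact le_refl 0]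
    _ = ∏ k : Fin t, ∑ σ ∈ f (W k), μ σ := aux_13 μ hμ1 f ρ hkey t W
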